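/- For every integer b ≥ 3, the tree H²(b-2, b-1; b, b+1) — obtained from two branching vertices z_3 and z_1 joined by a path z_3 z_2 z_1 of length 2, where z_1 carries two additional pendant paths of lengths b and b+1, and z_3 carries two additional pendant paths of lengths b-2 and b-1 — is a transmission irregular tree of order 4b + 1. -/

import Mathlib

/-- The transmission of a vertex: sum of distances to all other vertices. -/
noncomputable def transmission {V : Type*} [Fintype V] (G : SimpleGraph V) (v : V) : ℕ :=
  ∑ u : V, G.dist v u

/-- Arm lengths of `H²(b-2, b-1; b, b+1)`: arms `b` and `b+1` at `z₁`,
arms `b-2` and `b-1` at `z₃`. -/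
def armLen (b : ℕ) : Fin 4 → ℕ := ![b, b + 1, b - 2, b - 1]

/-- Vertex set: `Fin 3` is the central path `z₁ z₂ z₃` (as `0 1 2`), and `⟨i, j⟩` is the
`(j+1)`-st vertex on the `i`-th pendant arm. -/
abbrev HVert (b : ℕ) : Type := Fin 3 ⊕ (Σ i : Fin 4, Fin (armLen b i))

/-- Which central vertex each arm is attached to: arms 0, 1 at `z₁ = 0`, arms 2, 3 at `z₃ = 2`. -/
def armRoot : Fin 4 → Fin 3 := ![0, 0, 2, 2]

/-- The tree `H²(b-2, b-1; b, b+1)`: a central path `z₁ z₂ z₃`, pendant paths of lengths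
`b` and `b+1` attached at `z₁`, and pendant paths of lengths `b-2` and `b-1` attached at `z₃`. -/
def Htree (b : ℕ) : SimpleGraph (HVert b) :=
  SimpleGraph.fromRel (fun x y =>
    match x, y with
    | Sum.inl c, Sum.inl c' => ((c : ℕ) = 0 ∧ (c' : ℕ) = 1) ∨ ((c : ℕ) = 1 ∧ (c' : ℕ) = 2)
    | Sum.inl c, Sum.inr q => c = armRoot q.1 ∧ (q.2 : ℕ) = 0
    | Sum.inr q, Sum.inr q' => q.1 = q'.1 ∧ (q'.2 : ℕ) = (q.2 : ℕ) + 1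
    | _, _ => False)

/-! ### Auxiliary machinery -/

/-- The underlying relation of `Htree`. -/
def R (b : ℕ) : HVert b → HVert b → Prop := fun x y =>
  match x, y with
  | Sum.inl c, Sum.inl c' => ((c : ℕ) = 0 ∧ (c' : ℕ) = 1) ∨ ((c : ℕ) = 1 ∧ (c' : ℕ) = 2)
  | Sum.inl c, Sum.inr q => c = armRoot q.1 ∧ (q.2 : ℕ) = 0
  | Sum.inr q, Sum.inr q' => q.1 = q'.1 ∧ (q'.2 : ℕ) = (q.2 : ℕ) + 1
  | _, _ => False

lemma Htree_eq (b : ℕ) : Htree b = SimpleGraph.fromRel (R b) := rfl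

/-- absolute difference on ℕ -/
def dd (x y : ℕ) : ℕ := (x - y) + (y - x)

/-- explicit distance function -/
def D (b : ℕ) : HVert b → HVert b → ℕ
  | .inl c, .inl c' => dd c c'
  | .inl c, .inr q => dd c (armRoot q.1) + q.2 + 1
  | .inr q, .inl c => dd (armRoot q.1) c + q.2 + 1
  | .inr q, .inr q' =>
      if q.1 = q'.1 then dd q.2 q'.2
      else (q.2 + 1) + dd (armRoot q.1) (armRoot q'.1) + (q'.2 + 1)

section Basic
variable {b : ℕ}

lemma lip_of_rel {x y : HVert b} (h : R b x y) (u : HVert b) :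
    D b x u ≤ D b y u + 1 ∧ D b y u ≤ D b x u + 1 := by
  rcases x with c | ⟨i, j⟩ <;> rcases y with c' | ⟨i', j'⟩ <;> dsimp only [R] at h ⊢
  · rcases u with c'' | ⟨i'', j''⟩ <;> simp only [D, dd] <;>
      obtain h | h := h <;> omega
  · obtain ⟨h1, h2⟩ := h
    have h1' : (c : ℕ) = armRoot i' := by rw [h1]
    rcases u with c'' | ⟨i'', j''⟩
    · simp only [D, dd]; omega
    · simp only [D, dd]
      by_cases hii : i' = i''
      · rw [if_pos hii]
        have : (armRoot i' : ℕ) = armRoot i'' := by rw [hii]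
        omega
      · rw [if_neg hii]; omega
  · obtain ⟨h1, h2⟩ := h
    have hr : (armRoot i : ℕ) = armRoot i' := by rw [h1]
    rcases u with c'' | ⟨i'', j''⟩
    · simp only [D, dd]; omega
    · simp only [D, dd]
      by_cases hii : i = i''
      · rw [if_pos hii, if_pos (h1 ▸ hii)]; omega
      · rw [if_neg hii, if_neg (by rw [← h1]; exact hii)]; omega

lemma D_lip {x y : HVert b} (h : (Htree b).Adj x y) (u : HVert b) :
    D b x u ≤ D b y u + 1 := by
  rw [Htree_eq, SimpleGraph.fromRel_adj] at h
  obtain ⟨-, h | h⟩ := h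
  · exact (lip_of_rel h u).1
  · exact (lip_of_rel h u).2

lemma adjC {c c' : Fin 3} (h : (c : ℕ) + 1 = (c' : ℕ)) :
    (Htree b).Adj (Sum.inl c) (Sum.inl c') := by
  rw [Htree_eq, SimpleGraph.fromRel_adj]
  refine ⟨fun e => ?_, Or.inl ?_⟩
  · rw [Sum.inl.injEq] at e; rw [e] at h; omega
  · dsimp only [R]; have := c'.isLt; omega

lemma adjRoot (i : Fin 4) (j0 : Fin (armLen b i)) (h : (j0 : ℕ) = 0) :
    (Htree b).Adj (Sum.inl (armRoot i)) (Sum.inr ⟨i, j0⟩) := by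
  rw [Htree_eq, SimpleGraph.fromRel_adj]
  exact ⟨fun e => Sum.inl_ne_inr e, Or.inl ⟨rfl, h⟩⟩

lemma adjArm {i : Fin 4} (j j' : Fin (armLen b i)) (h : (j' : ℕ) = (j : ℕ) + 1) :
    (Htree b).Adj (Sum.inr ⟨i, j⟩) (Sum.inr ⟨i, j'⟩) := by
  rw [Htree_eq, SimpleGraph.fromRel_adj]
  refine ⟨fun e => ?_, Or.inl ⟨rfl, h⟩⟩
  rw [Sum.inr.injEq, Sigma.mk.inj_iff] at e
  have := congrArg Fin.val (eq_of_heq e.2); omega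

lemma D_step {v u : HVert b} (h : v ≠ u) :
    ∃ w, (Htree b).Adj v w ∧ D b w u + 1 = D b v u := by
  rcases v with c | ⟨i, j⟩ <;> rcases u with c' | ⟨i', j'⟩
  · have hne : (c : ℕ) ≠ (c' : ℕ) := fun e => h (by rw [show c = c' from Fin.ext e])
    have h2 := c.isLt; have h3 := c'.isLt
    by_cases hlt : (c : ℕ) < (c' : ℕ)
    · exact ⟨Sum.inl ⟨(c : ℕ) + 1, by omega⟩, adjC rfl, by simp only [D, dd]; omega⟩
    · exact ⟨Sum.inl ⟨(c : ℕ) - 1, by omega⟩, (adjC (by dsimp; omega)).symm,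
        by simp only [D, dd]; omega⟩
  · by_cases hc : c = armRoot i'
    · refine ⟨Sum.inr ⟨i', ⟨0, lt_of_le_of_lt (Nat.zero_le _) j'.isLt⟩⟩,
        hc ▸ adjRoot i' _ rfl, ?_⟩
      simp [D, dd]
      have : (c : ℕ) = armRoot i' := by rw [hc]
      omega
    · have hne : (c : ℕ) ≠ (armRoot i' : ℕ) := fun e => hc (Fin.ext e)
      have h2 := c.isLt; have h3 := (armRoot i').isLt
      by_cases hlt : (c : ℕ) < (armRoot i' : ℕ)
      · exact ⟨Sum.inl ⟨(c : ℕ) + 1, by omega⟩, adjC rfl, by simp only [D, dd]; omega⟩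
      · exact ⟨Sum.inl ⟨(c : ℕ) - 1, by omega⟩, (adjC (by dsimp; omega)).symm,
          by simp only [D, dd]; omega⟩
  · by_cases hj : (j : ℕ) = 0
    · exact ⟨Sum.inl (armRoot i), (adjRoot i j hj).symm, by simp only [D, dd]; omega⟩
    · refine ⟨Sum.inr ⟨i, ⟨(j : ℕ) - 1, by omega⟩⟩, (adjArm _ j (by dsimp; omega)).symm, ?_⟩
      simp only [D, dd]; omega
  · by_cases hii : i = i'
    · subst hii
      have hjj : (j : ℕ) ≠ (j' : ℕ) := fun e => h (by rw [show j = j' from Fin.ext e])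
      by_cases hlt : (j : ℕ) < (j' : ℕ)
      · refine ⟨Sum.inr ⟨i, ⟨(j : ℕ) + 1, by omega⟩⟩, adjArm j _ rfl, ?_⟩
        simp [D, dd]; omega
      · refine ⟨Sum.inr ⟨i, ⟨(j : ℕ) - 1, by omega⟩⟩, (adjArm _ j (by dsimp; omega)).symm, ?_⟩
        simp [D, dd]; omega
    · by_cases hj : (j : ℕ) = 0
      · refine ⟨Sum.inl (armRoot i), (adjRoot i j hj).symm, ?_⟩
        simp only [D, dd, if_neg hii]; omega
      · refine ⟨Sum.inr ⟨i, ⟨(j : ℕ) - 1, by omega⟩⟩, (adjArm _ j (by dsimp; omega)).symm, ?_⟩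
        simp only [D, dd, if_neg hii]; omega

lemma D_self (v : HVert b) : D b v v = 0 := by
  rcases v with c | ⟨i, j⟩ <;> simp [D, dd]

lemma H_reach : ∀ (n : ℕ) (v u : HVert b), D b v u ≤ n → (Htree b).Reachable v u := by
  intro n
  induction n with
  | zero =>
    intro v u hD
    by_cases hvu : v = u
    · exact hvu ▸ SimpleGraph.Reachable.refl v
    · obtain ⟨w, -, hw⟩ := D_step hvu; omega
  | succ n ih =>
    intro v u hD
    by_cases hvu : v = u
    · exact hvu ▸ SimpleGraph.Reachable.refl v
    · obtain ⟨w, hadj, hw⟩ := D_step hvu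
      exact hadj.reachable.trans (ih w u (by omega))

lemma H_conn : (Htree b).Connected := by
  have : Nonempty (HVert b) := ⟨Sum.inl 0⟩
  exact ⟨fun v u => H_reach _ v u le_rfl⟩

lemma D_le_walk {v u : HVert b} (p : (Htree b).Walk v u) : D b v u ≤ p.length := by
  induction p with
  | nil => simp [D_self]
  | cons h p ih => simpa [Nat.add_comm] using (D_lip h _).trans (Nat.add_le_add_right ih 1)

lemma dist_eq (v u : HVert b) : (Htree b).dist v u = D b v u := by
  refine Nat.le_antisymm ?_ ?_
  · suffices H : ∀ (n : ℕ) (v u : HVert b), D b v u ≤ n → (Htree b).dist v u ≤ D b v u from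
      H (D b v u) v u le_rfl
    intro n
    induction n with
    | zero =>
      intro v u hD
      by_cases hvu : v = u
      · subst hvu; simp [SimpleGraph.dist_self]
      · obtain ⟨w, -, hw⟩ := D_step hvu; omega
    | succ n ih =>
      intro v u hD
      by_cases hvu : v = u
      · subst hvu; simp [SimpleGraph.dist_self]
      · obtain ⟨w, hadj, hw⟩ := D_step hvu
        obtain ⟨p, hp⟩ := (H_reach (D b w u) w u le_rfl).exists_walk_length_eq_dist
        have h1 : (Htree b).dist v u ≤ (SimpleGraph.Walk.cons hadj p).length :=
          SimpleGraph.dist_le _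
        have h2 := ih w u (by omega)
        simp only [SimpleGraph.Walk.length_cons, hp] at h1
        omega
  · obtain ⟨p, hp⟩ := (H_conn.preconnected v u).exists_walk_length_eq_dist
    exact hp ▸ D_le_walk p

lemma reach_pres {V : Type*} {G : SimpleGraph V} {S : V → Prop}
    (hS : ∀ ⦃a c : V⦄, G.Adj a c → (S a ↔ S c)) {v w : V} (h : G.Reachable v w) :
    S v ↔ S w := by
  obtain ⟨p⟩ := h
  induction p with
  | nil => exact Iff.rfl
  | cons h p ih => exact (hS h).trans ih

lemma sigma_ext {b : ℕ} {i i' : Fin 4} {j : Fin (armLen b i)} {j' : Fin (armLen b i')}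
    (h : i = i') (hv : (j : ℕ) = (j' : ℕ)) :
    (⟨i, j⟩ : Σ k, Fin (armLen b k)) = ⟨i', j'⟩ := by
  subst h; exact congrArg _ (Fin.ext hv)

lemma sigma_ext' {b : ℕ} {q q' : Σ k, Fin (armLen b k)}
    (h : q.1 = q'.1) (hv : (q.2 : ℕ) = (q'.2 : ℕ)) : q = q' := by
  obtain ⟨i, j⟩ := q; obtain ⟨i', j'⟩ := q'
  exact sigma_ext h (by exact hv)

lemma G'_adj {b : ℕ} {x y a c : HVert b}
    (h : ((Htree b) \ SimpleGraph.fromEdgeSet {s(x, y)}).Adj a c) :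
    (a ≠ c ∧ (R b a c ∨ R b c a)) ∧ s(a, c) ≠ s(x, y) := by
  rw [SimpleGraph.sdiff_adj, SimpleGraph.fromEdgeSet_adj] at h
  obtain ⟨h1, h2⟩ := h
  rw [Htree_eq, SimpleGraph.fromRel_adj] at h1
  exact ⟨h1, fun e => h2 ⟨by simp [e], h1.1⟩⟩

lemma bridge_central {b : ℕ} {c c' : Fin 3} (hcc : (c : ℕ) + 1 = (c' : ℕ)) :
    ¬ ((Htree b) \ SimpleGraph.fromEdgeSet {s((Sum.inl c : HVert b), Sum.inl c')}).Reachable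
      (Sum.inl c) (Sum.inl c') := by
  intro hreach
  -- S : on the ≤ c side
  have key := reach_pres (S := fun z : HVert b => match z with
    | Sum.inl d => (d : ℕ) ≤ (c : ℕ)
    | Sum.inr q => (armRoot q.1 : ℕ) ≤ (c : ℕ)) ?_ hreach
  · dsimp at key; omega
  · rintro (d | q) (d' | q') hadj
    · obtain ⟨⟨hne, hr⟩, hs⟩ := G'_adj hadj
      dsimp only [R] at hr; dsimp
      have hdd : (d : ℕ) ≠ (d' : ℕ) := fun e => hne (by rw [Fin.ext e])
      -- if the edge crosses c/c' it must be the removed edge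
      by_cases hcross : ((d:ℕ) = c ∧ (d':ℕ) = c') ∨ ((d:ℕ) = c' ∧ (d':ℕ) = c)
      · exfalso; apply hs
        rw [Sym2.eq_iff]
        obtain ⟨e1, e2⟩ | ⟨e1, e2⟩ := hcross
        · exact Or.inl ⟨congrArg Sum.inl (Fin.ext e1), congrArg Sum.inl (Fin.ext e2)⟩
        · exact Or.inr ⟨congrArg Sum.inl (Fin.ext e1), congrArg Sum.inl (Fin.ext e2)⟩
      · obtain (⟨e1, e2⟩ | ⟨e1, e2⟩) | (⟨e1, e2⟩ | ⟨e1, e2⟩) := hr <;> omega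
    · obtain ⟨⟨hne, hr⟩, hs⟩ := G'_adj hadj
      dsimp only [R] at hr; dsimp
      obtain ⟨e1, e2⟩ | h := hr
      · have : (d : ℕ) = armRoot q'.1 := by rw [e1]
        omega
      · exact h.elim
    · obtain ⟨⟨hne, hr⟩, hs⟩ := G'_adj hadj
      dsimp only [R] at hr; dsimp
      obtain h | ⟨e1, e2⟩ := hr
      · exact h.elim
      · have : (d' : ℕ) = armRoot q.1 := by rw [e1]
        omega
    · obtain ⟨⟨hne, hr⟩, hs⟩ := G'_adj hadj
      dsimp only [R] at hr; dsimp
      obtain ⟨e1, e2⟩ | ⟨e1, e2⟩ := hr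
      · have : (armRoot q.1 : ℕ) = armRoot q'.1 := by rw [e1]
        omega
      · have : (armRoot q'.1 : ℕ) = armRoot q.1 := by rw [e1]
        omega

lemma bridge_root {b : ℕ} {c : Fin 3} {i' : Fin 4} {j' : Fin (armLen b i')}
    (hc : c = armRoot i') (hj0 : (j' : ℕ) = 0) :
    ¬ ((Htree b) \ SimpleGraph.fromEdgeSet {s((Sum.inl c : HVert b), Sum.inr ⟨i', j'⟩)}).Reachable
      (Sum.inl c) (Sum.inr ⟨i', j'⟩) := by
  intro hreach
  have key := reach_pres (S := fun z : HVert b => match z with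
    | Sum.inl _ => False
    | Sum.inr q => q.1 = i') ?_ hreach
  · exact key.mpr rfl
  · rintro (d | q) (d' | q') hadj
    · exact Iff.rfl
    · obtain ⟨⟨hne, hr⟩, hs⟩ := G'_adj hadj
      dsimp only [R] at hr; dsimp
      obtain ⟨e1, e2⟩ | h := hr
      · constructor
        · rintro ⟨⟩
        · intro hq
          apply hs
          rw [Sym2.eq_iff]
          exact Or.inl ⟨by rw [e1, hq, ← hc], congrArg Sum.inr (sigma_ext' hq (by dsimp; omega))⟩
      · exact h.elim
    · obtain ⟨⟨hne, hr⟩, hs⟩ := G'_adj hadj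
      dsimp only [R] at hr; dsimp
      obtain h | ⟨e1, e2⟩ := hr
      · exact h.elim
      · constructor
        · intro hq
          apply hs
          rw [Sym2.eq_iff]
          exact Or.inr ⟨congrArg Sum.inr (sigma_ext' hq (by dsimp; omega)), by rw [e1, hq, ← hc]⟩
        · rintro ⟨⟩
    · obtain ⟨⟨hne, hr⟩, hs⟩ := G'_adj hadj
      dsimp only [R] at hr; dsimp
      obtain ⟨e1, e2⟩ | ⟨e1, e2⟩ := hr
      · rw [e1]
      · rw [e1]

lemma bridge_arm {b : ℕ} {i : Fin 4} {j j' : Fin (armLen b i)} (hjj : (j' : ℕ) = (j : ℕ) + 1) :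
    ¬ ((Htree b) \ SimpleGraph.fromEdgeSet
        {s((Sum.inr ⟨i, j⟩ : HVert b), Sum.inr ⟨i, j'⟩)}).Reachable
      (Sum.inr ⟨i, j⟩) (Sum.inr ⟨i, j'⟩) := by
  intro hreach
  have key := reach_pres (S := fun z : HVert b => match z with
    | Sum.inl _ => False
    | Sum.inr q => q.1 = i ∧ (j : ℕ) + 1 ≤ (q.2 : ℕ)) ?_ hreach
  · dsimp at key
    have h0 := key.mpr ⟨rfl, by first
              | omega
              | (dsimp at *; omega)⟩
    first
              | omega
              | (dsimp at *; omega)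
  · rintro (d | q) (d' | q') hadj
    · exact Iff.rfl
    · obtain ⟨⟨hne, hr⟩, hs⟩ := G'_adj hadj
      dsimp only [R] at hr; dsimp
      obtain ⟨e1, e2⟩ | h := hr
      · constructor
        · rintro ⟨⟩
        · rintro ⟨h1, h2⟩; first
              | omega
              | (dsimp at *; omega)
      · exact h.elim
    · obtain ⟨⟨hne, hr⟩, hs⟩ := G'_adj hadj
      dsimp only [R] at hr; dsimp
      obtain h | ⟨e1, e2⟩ := hr
      · exact h.elim
      · constructor
        · rintro ⟨h1, h2⟩; first
              | omega
              | (dsimp at *; omega)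
        · rintro ⟨⟩
    · obtain ⟨⟨hne, hr⟩, hs⟩ := G'_adj hadj
      dsimp only [R] at hr; dsimp
      obtain ⟨e1, e2⟩ | ⟨e1, e2⟩ := hr
      · by_cases hq : q.1 = i
        · constructor
          · rintro ⟨h1, h2⟩
            exact ⟨e1 ▸ h1, by first
              | omega
              | (dsimp at *; omega)⟩
          · rintro ⟨h1, h2⟩
            refine ⟨hq, ?_⟩
            rcases Nat.lt_or_ge (j : ℕ) (q.2 : ℕ) with h | h
            · first
              | omega
              | (dsimp at *; omega)
            · exfalso; apply hs
              rw [Sym2.eq_iff]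
              refine Or.inl ⟨congrArg Sum.inr (sigma_ext' hq (by first
              | omega
              | (dsimp at *; omega))),
                congrArg Sum.inr (sigma_ext' (e1 ▸ hq) (by dsimp; first
              | omega
              | (dsimp at *; omega)))⟩
        · constructor
          · rintro ⟨h1, h2⟩; exact absurd h1 hq
          · rintro ⟨h1, h2⟩; exact absurd (e1.trans h1) hq
      · by_cases hq : q'.1 = i
        · constructor
          · rintro ⟨h1, h2⟩
            refine ⟨hq, ?_⟩
            rcases Nat.lt_or_ge (j : ℕ) (q'.2 : ℕ) with h | h
            · first
              | omega
              | (dsimp at *; omega)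
            · exfalso; apply hs
              rw [Sym2.eq_iff]
              refine Or.inr ⟨congrArg Sum.inr (sigma_ext' (e1 ▸ hq) (by dsimp; first
              | omega
              | (dsimp at *; omega))),
                congrArg Sum.inr (sigma_ext' hq (by first
              | omega
              | (dsimp at *; omega)))⟩
          · rintro ⟨h1, h2⟩
            exact ⟨e1 ▸ h1, by first
              | omega
              | (dsimp at *; omega)⟩
        · constructor
          · rintro ⟨h1, h2⟩; exact absurd (e1.trans h1) hq
          · rintro ⟨h1, h2⟩; exact absurd h1 hq

lemma bridge_helper {b : ℕ} {x y : HVert b} (hR : R b x y) :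
    ¬ ((Htree b) \ SimpleGraph.fromEdgeSet {s(x, y)}).Reachable x y := by
  rcases x with c | ⟨i, j⟩ <;> rcases y with c' | ⟨i', j'⟩ <;> dsimp only [R] at hR
  · obtain ⟨hc, hc'⟩ | ⟨hc, hc'⟩ := hR
    · exact bridge_central (by first
              | omega
              | (dsimp at *; omega))
    · exact bridge_central (by first
              | omega
              | (dsimp at *; omega))
  · exact bridge_root hR.1 hR.2
  · obtain ⟨hii, hjj⟩ := hR
    subst hii
    exact bridge_arm hjj

lemma H_acyclic : (Htree b).IsAcyclic := by
  rw [SimpleGraph.isAcyclic_iff_forall_adj_isBridge]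
  intro v w hadj
  rw [SimpleGraph.isBridge_iff]
  refine ?_
  have h := hadj
  rw [Htree_eq, SimpleGraph.fromRel_adj] at h
  obtain ⟨hne, hr | hr⟩ := h
  · exact fun hre => bridge_helper hr hre
  · intro hre
    have hswap : s(v, w) = s(w, v) := Sym2.eq_swap
    rw [hswap] at hre
    exact bridge_helper hr hre.symm

end Basic



lemma gauss1 (L : ℕ) : 2 * ∑ i ∈ Finset.range L, (i + 1) = L * (L + 1) := by
  induction L with
  | zero => simp
  | succ n ih =>
    rw [Finset.sum_range_succ, Nat.mul_add, ih]
    ring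

lemma sumA (L A : ℕ) : 2 * ∑ j ∈ Finset.range L, (A + j + 1) = 2 * L * A + L * (L + 1) := by
  have h1 : ∑ j ∈ Finset.range L, (A + j + 1) = ∑ j ∈ Finset.range L, A + ∑ j ∈ Finset.range L, (j + 1) := by
    rw [← Finset.sum_add_distrib]
    exact Finset.sum_congr rfl fun x _ => by omega
  rw [h1, Finset.sum_const, Finset.card_range, Nat.mul_add, smul_eq_mul, gauss1]
  ring

lemma sumB {L j : ℕ} (h : j < L) :
    2 * ∑ x ∈ Finset.range L, dd j x = j * (j + 1) + (L - 1 - j) * (L - j) := by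
  rw [Finset.range_eq_Ico, ← Finset.sum_Ico_consecutive _ (Nat.zero_le (j+1)) h]
  have h1 : ∑ x ∈ Finset.Ico 0 (j + 1), dd j x = ∑ x ∈ Finset.range (j + 1), x := by
    rw [← Finset.range_eq_Ico, ← Finset.sum_range_reflect (fun x => x) (j + 1)]
    exact Finset.sum_congr rfl fun x hx => by
      simp only [Finset.mem_range] at hx; simp only [dd]; omega
  have h2 : ∑ x ∈ Finset.Ico (j + 1) L, dd j x = ∑ k ∈ Finset.range (L - 1 - j), (k + 1) := by
    rw [Finset.sum_Ico_eq_sum_range]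
    refine Finset.sum_congr (by congr 1; omega) fun x hx => by
      simp only [Finset.mem_range] at hx; simp only [dd]; omega
  have g : 2 * ∑ x ∈ Finset.range (j + 1), x = j * (j + 1) := by
    rw [Finset.sum_range_succ' (fun i => i) j]
    simpa using gauss1 j
  rw [h1, h2, Nat.mul_add, gauss1, g, show L - j = (L - 1 - j) + 1 by omega]

def F (b : ℕ) : HVert b → ℕ
  | .inl c => 4*b*b + 8*b - 2 + ![0, 6, 16] c
  | .inr q => 2*((q.2:ℕ)+1)*((q.2:ℕ)+1) + 2*(![2*b, 2*b-2, 2*b+4, 2*b+2] q.1)*((q.2:ℕ)+1)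
      + (4*b*b + 8*b - 2) + ![0, 0, 16, 16] q.1


lemma sumA' (L A : ℕ) : 2 * ∑ j : Fin L, (A + (j:ℕ) + 1) = 2*L*A + L*(L+1) := by
  rw [Fin.sum_univ_eq_sum_range (fun t => A + t + 1) L]; exact sumA L A

lemma sumA2 (L A : ℕ) : 2 * ∑ j : Fin L, (A + ((j:ℕ) + 1)) = 2*L*A + L*(L+1) := by
  rw [Fin.sum_univ_eq_sum_range (fun t => A + (t + 1)) L]
  have := sumA L A
  have e : ∀ x ∈ Finset.range L, A + (x + 1) = A + x + 1 := fun x _ => by omega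
  rw [Finset.sum_congr rfl e]
  exact this

lemma sumB' (L t : ℕ) (h : t < L) :
    2 * ∑ x : Fin L, dd t (x:ℕ) = t * (t + 1) + (L - 1 - t) * (L - t) := by
  rw [Fin.sum_univ_eq_sum_range (fun x => dd t x) L]; exact sumB h

lemma transC {m : ℕ} (c : Fin 3) :
    2 * transmission (Htree (m+3)) (Sum.inl c) = F (m+3) (Sum.inl c) := by
  have hL0 : armLen (m+3) 0 = m + 3 := rfl
  have hL1 : armLen (m+3) 1 = m + 4 := rfl
  have hL2 : armLen (m+3) 2 = m + 1 := by simp [armLen]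
  have hL3 : armLen (m+3) 3 = m + 2 := by simp [armLen]
  unfold transmission
  simp only [dist_eq]
  rw [Fintype.sum_sum_type, ← Finset.univ_sigma_univ, Finset.sum_sigma,
    Fin.sum_univ_three, Fin.sum_univ_four]
  simp only [D]
  rw [Fin.sum_univ_eq_sum_range (fun t => dd ↑c ↑(armRoot 0) + t + 1) (armLen (m+3) 0),
      Fin.sum_univ_eq_sum_range (fun t => dd ↑c ↑(armRoot 1) + t + 1) (armLen (m+3) 1),
      Fin.sum_univ_eq_sum_range (fun t => dd ↑c ↑(armRoot 2) + t + 1) (armLen (m+3) 2),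
      Fin.sum_univ_eq_sum_range (fun t => dd ↑c ↑(armRoot 3) + t + 1) (armLen (m+3) 3),
      hL0, hL1, hL2, hL3]
  have E0 := sumA (m+3) (dd c (armRoot 0))
  have E1 := sumA (m+4) (dd c (armRoot 1))
  have E2 := sumA (m+1) (dd c (armRoot 2))
  have E3 := sumA (m+2) (dd c (armRoot 3))
  fin_cases c <;>
    simp only [F, armRoot, dd, Matrix.cons_val_zero, Matrix.cons_val_one, Matrix.head_cons,
      Matrix.cons_val_two, Matrix.tail_cons, Matrix.cons_val_three, Fin.isValue] at E0 E1 E2 E3 ⊢ <;>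
    norm_num at E0 E1 E2 E3 ⊢ <;>
    rw [show 4*(m+3)*(m+3)+8*(m+3)-2 = 4*m*m+32*m+58 from by
      have : 4*(m+3)*(m+3)+8*(m+3) = 4*m*m+32*m+60 := by ring
      omega] <;>
    zify at E0 E1 E2 E3 ⊢ <;>
    linear_combination E0 + E1 + E2 + E3

lemma sumA2r (L A : ℕ) : 2 * ∑ x ∈ Finset.range L, (A + (x + 1)) = 2*L*A + L*(L+1) := by
  rw [Finset.sum_congr rfl (fun x _ => by omega : ∀ x ∈ Finset.range L, A + (x+1) = A + x + 1)]
  exact sumA L A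

lemma transA0 {m : ℕ} (j : Fin (armLen (m+3) 0)) :
    2 * transmission (Htree (m+3)) (Sum.inr ⟨0, j⟩) = F (m+3) (Sum.inr ⟨0, j⟩) := by
  have hL0 : armLen (m+3) 0 = m + 3 := rfl
  have hL1 : armLen (m+3) 1 = m + 4 := rfl
  have hL2 : armLen (m+3) 2 = m + 1 := by simp [armLen]
  have hL3 : armLen (m+3) 3 = m + 2 := by simp [armLen]
  have hj : (j : ℕ) < m + 3 := j.isLt
  unfold transmission
  simp only [dist_eq]
  rw [Fintype.sum_sum_type, ← Finset.univ_sigma_univ, Finset.sum_sigma,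
    Fin.sum_univ_three, Fin.sum_univ_four]
  simp only [D]
  simp only [if_pos rfl, ite_true, if_neg (show ¬(0:Fin 4) = 1 by decide),
    if_neg (show ¬(0:Fin 4) = 2 by decide), if_neg (show ¬(0:Fin 4) = 3 by decide)]
  simp only [F, armRoot, Matrix.cons_val_zero, Matrix.cons_val_one, Matrix.head_cons,
    Matrix.cons_val_two, Matrix.tail_cons, Matrix.cons_val_three, Fin.isValue]
  norm_num
  rw [Fin.sum_univ_eq_sum_range (fun t => dd ↑j t) (armLen (m+3) 0),
      Fin.sum_univ_eq_sum_range (fun t => ↑j + 1 + dd 0 0 + (t + 1)) (armLen (m+3) 1),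
      Fin.sum_univ_eq_sum_range (fun t => ↑j + 1 + dd 0 2 + (t + 1)) (armLen (m+3) 2),
      Fin.sum_univ_eq_sum_range (fun t => ↑j + 1 + dd 0 2 + (t + 1)) (armLen (m+3) 3)]
  generalize hgen : (j : ℕ) = t at *
  rw [hL0, hL1, hL2, hL3]
  have E0 := sumB (show t < m + 3 by omega)
  have E1 := sumA2r (m+4) (t + 1 + dd 0 0)
  have E2 := sumA2r (m+1) (t + 1 + dd 0 2)
  have E3 := sumA2r (m+2) (t + 1 + dd 0 2)
  simp only [show dd 0 0 = 0 from rfl, show dd 0 1 = 1 from rfl, show dd 0 2 = 2 from rfl] at E0 E1 E2 E3 ⊢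
  norm_num at E0 E1 E2 E3 ⊢
  rw [show 4*(m+3)*(m+3)+8*(m+3)-2 = 4*m*m+32*m+58 from by
      have : 4*(m+3)*(m+3)+8*(m+3) = 4*m*m+32*m+60 := by ring
      omega]
  zify [show t ≤ m + 2 by omega, show t ≤ m + 3 by omega] at E0 E1 E2 E3 ⊢
  linear_combination E0 + E1 + E2 + E3

lemma transA1 {m : ℕ} (j : Fin (armLen (m+3) 1)) :
    2 * transmission (Htree (m+3)) (Sum.inr ⟨1, j⟩) = F (m+3) (Sum.inr ⟨1, j⟩) := by
  have hL0 : armLen (m+3) 0 = m + 3 := rfl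
  have hL1 : armLen (m+3) 1 = m + 4 := rfl
  have hL2 : armLen (m+3) 2 = m + 1 := by simp [armLen]
  have hL3 : armLen (m+3) 3 = m + 2 := by simp [armLen]
  have hj : (j : ℕ) < m + 4 := by have := j.isLt; omega
  unfold transmission
  simp only [dist_eq]
  rw [Fintype.sum_sum_type, ← Finset.univ_sigma_univ, Finset.sum_sigma,
    Fin.sum_univ_three, Fin.sum_univ_four]
  simp only [D]
  simp only [if_pos rfl, ite_true, if_neg (show ¬(1:Fin 4) = 0 by decide), if_neg (show ¬(1:Fin 4) = 2 by decide), if_neg (show ¬(1:Fin 4) = 3 by decide)]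
  simp only [F, armRoot, Matrix.cons_val_zero, Matrix.cons_val_one, Matrix.head_cons,
    Matrix.cons_val_two, Matrix.tail_cons, Matrix.cons_val_three, Fin.isValue]
  norm_num
  rw [Fin.sum_univ_eq_sum_range (fun t => (j:ℕ) + 1 + dd 0 0 + (t + 1)) (armLen (m+3) 0),
      Fin.sum_univ_eq_sum_range (fun t => dd (j:ℕ) t) (armLen (m+3) 1),
      Fin.sum_univ_eq_sum_range (fun t => (j:ℕ) + 1 + dd 0 2 + (t + 1)) (armLen (m+3) 2),
      Fin.sum_univ_eq_sum_range (fun t => (j:ℕ) + 1 + dd 0 2 + (t + 1)) (armLen (m+3) 3)]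
  generalize hgen : (j : ℕ) = t at *
  rw [hL0, hL1, hL2, hL3]
  have E0 := sumA2r (m+3) (t + 1 + dd 0 0)
  have E1 := sumB (show t < m + 4 by omega)
  have E2 := sumA2r (m+1) (t + 1 + dd 0 2)
  have E3 := sumA2r (m+2) (t + 1 + dd 0 2)
  simp only [show dd 0 0 = 0 from rfl, show dd 0 1 = 1 from rfl, show dd 0 2 = 2 from rfl] at E0 E1 E2 E3 ⊢
  norm_num at E0 E1 E2 E3 ⊢
  rw [show 4*(m+3)*(m+3)+8*(m+3)-2 = 4*m*m+32*m+58 from by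
      have : 4*(m+3)*(m+3)+8*(m+3) = 4*m*m+32*m+60 := by ring
      omega]
  rw [show 2*(m+3)-2 = 2*m+4 by omega]
  zify [show t ≤ m + 3 by omega, show t ≤ m + 4 by omega] at E0 E1 E2 E3 ⊢
  linear_combination E0 + E1 + E2 + E3

lemma transA2 {m : ℕ} (j : Fin (armLen (m+3) 2)) :
    2 * transmission (Htree (m+3)) (Sum.inr ⟨2, j⟩) = F (m+3) (Sum.inr ⟨2, j⟩) := by
  have hL0 : armLen (m+3) 0 = m + 3 := rfl
  have hL1 : armLen (m+3) 1 = m + 4 := rfl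
  have hL2 : armLen (m+3) 2 = m + 1 := by simp [armLen]
  have hL3 : armLen (m+3) 3 = m + 2 := by simp [armLen]
  have hj : (j : ℕ) < m + 1 := by have := j.isLt; omega
  unfold transmission
  simp only [dist_eq]
  rw [Fintype.sum_sum_type, ← Finset.univ_sigma_univ, Finset.sum_sigma,
    Fin.sum_univ_three, Fin.sum_univ_four]
  simp only [D]
  simp only [if_pos rfl, ite_true, if_neg (show ¬(2:Fin 4) = 0 by decide), if_neg (show ¬(2:Fin 4) = 1 by decide), if_neg (show ¬(2:Fin 4) = 3 by decide)]
  simp only [F, armRoot, Matrix.cons_val_zero, Matrix.cons_val_one, Matrix.head_cons,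
    Matrix.cons_val_two, Matrix.tail_cons, Matrix.cons_val_three, Fin.isValue]
  norm_num
  rw [Fin.sum_univ_eq_sum_range (fun t => (j:ℕ) + 1 + dd 2 0 + (t + 1)) (armLen (m+3) 0),
      Fin.sum_univ_eq_sum_range (fun t => (j:ℕ) + 1 + dd 2 0 + (t + 1)) (armLen (m+3) 1),
      Fin.sum_univ_eq_sum_range (fun t => dd (j:ℕ) t) (armLen (m+3) 2),
      Fin.sum_univ_eq_sum_range (fun t => (j:ℕ) + 1 + dd 2 2 + (t + 1)) (armLen (m+3) 3)]
  generalize hgen : (j : ℕ) = t at *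
  rw [hL0, hL1, hL2, hL3]
  have E0 := sumA2r (m+3) (t + 1 + dd 2 0)
  have E1 := sumA2r (m+4) (t + 1 + dd 2 0)
  have E2 := sumB (show t < m + 1 by omega)
  have E3 := sumA2r (m+2) (t + 1 + dd 2 2)
  simp only [show dd 2 0 = 2 from rfl, show dd 2 1 = 1 from rfl, show dd 2 2 = 0 from rfl] at E0 E1 E2 E3 ⊢
  norm_num at E0 E1 E2 E3 ⊢
  rw [show 4*(m+3)*(m+3)+8*(m+3)-2 = 4*m*m+32*m+58 from by
      have : 4*(m+3)*(m+3)+8*(m+3) = 4*m*m+32*m+60 := by ring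
      omega]
  zify [show t ≤ m by omega, show t ≤ m + 1 by omega] at E0 E1 E2 E3 ⊢
  linear_combination E0 + E1 + E2 + E3

lemma transA3 {m : ℕ} (j : Fin (armLen (m+3) 3)) :
    2 * transmission (Htree (m+3)) (Sum.inr ⟨3, j⟩) = F (m+3) (Sum.inr ⟨3, j⟩) := by
  have hL0 : armLen (m+3) 0 = m + 3 := rfl
  have hL1 : armLen (m+3) 1 = m + 4 := rfl
  have hL2 : armLen (m+3) 2 = m + 1 := by simp [armLen]
  have hL3 : armLen (m+3) 3 = m + 2 := by simp [armLen]
  have hj : (j : ℕ) < m + 2 := by have := j.isLt; omega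
  unfold transmission
  simp only [dist_eq]
  rw [Fintype.sum_sum_type, ← Finset.univ_sigma_univ, Finset.sum_sigma,
    Fin.sum_univ_three, Fin.sum_univ_four]
  simp only [D]
  simp only [if_pos rfl, ite_true, if_neg (show ¬(3:Fin 4) = 0 by decide), if_neg (show ¬(3:Fin 4) = 1 by decide), if_neg (show ¬(3:Fin 4) = 2 by decide)]
  simp only [F, armRoot, Matrix.cons_val_zero, Matrix.cons_val_one, Matrix.head_cons,
    Matrix.cons_val_two, Matrix.tail_cons, Matrix.cons_val_three, Fin.isValue]
  norm_num
  rw [Fin.sum_univ_eq_sum_range (fun t => (j:ℕ) + 1 + dd 2 0 + (t + 1)) (armLen (m+3) 0),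
      Fin.sum_univ_eq_sum_range (fun t => (j:ℕ) + 1 + dd 2 0 + (t + 1)) (armLen (m+3) 1),
      Fin.sum_univ_eq_sum_range (fun t => (j:ℕ) + 1 + dd 2 2 + (t + 1)) (armLen (m+3) 2),
      Fin.sum_univ_eq_sum_range (fun t => dd (j:ℕ) t) (armLen (m+3) 3)]
  generalize hgen : (j : ℕ) = t at *
  rw [hL0, hL1, hL2, hL3]
  have E0 := sumA2r (m+3) (t + 1 + dd 2 0)
  have E1 := sumA2r (m+4) (t + 1 + dd 2 0)
  have E2 := sumA2r (m+1) (t + 1 + dd 2 2)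
  have E3 := sumB (show t < m + 2 by omega)
  simp only [show dd 2 0 = 2 from rfl, show dd 2 1 = 1 from rfl, show dd 2 2 = 0 from rfl] at E0 E1 E2 E3 ⊢
  norm_num at E0 E1 E2 E3 ⊢
  rw [show 4*(m+3)*(m+3)+8*(m+3)-2 = 4*m*m+32*m+58 from by
      have : 4*(m+3)*(m+3)+8*(m+3) = 4*m*m+32*m+60 := by ring
      omega]
  zify [show t ≤ m + 1 by omega, show t ≤ m + 2 by omega] at E0 E1 E2 E3 ⊢
  linear_combination E0 + E1 + E2 + E3

lemma trans2 {m : ℕ} (v : HVert (m+3)) :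
    2 * transmission (Htree (m+3)) v = F (m+3) v := by
  rcases v with c | ⟨i, j⟩
  · exact transC c
  · fin_cases i
    · exact transA0 j
    · exact transA1 j
    · exact transA2 j
    · exact transA3 j

section ZLemmas

-- ℤ arithmetic core lemmas
lemma zno01 (m x y : ℤ) (hm : 0 ≤ m) (hx1 : 1 ≤ x) (hy1 : 1 ≤ y)
    (h : 2*x*x + (4*m+12)*x = 2*y*y + (4*m+8)*y) : False := by
  have hxy : x + 1 ≤ y := by
    by_contra hc
    push_neg at hc
    have h1 : y*y ≤ x*x := mul_le_mul (by omega) (by omega) (by omega) (by omega)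
    have h2 : (4*m+8)*y ≤ (4*m+8)*x := mul_le_mul_of_nonneg_left (by omega) (by omega)
    nlinarith
  have h1 : (x+1)*(x+1) ≤ y*y := mul_le_mul (by omega) (by omega) (by omega) (by omega)
  have h2 : (4*m+8)*(x+1) ≤ (4*m+8)*y := mul_le_mul_of_nonneg_left (by omega) (by omega)
  nlinarith

lemma zno23 (m x y : ℤ) (hm : 0 ≤ m) (hx1 : 1 ≤ x) (hy1 : 1 ≤ y)
    (h : 2*x*x + (4*m+20)*x + 16 = 2*y*y + (4*m+16)*y + 16) : False := by
  have hxy : x + 1 ≤ y := by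
    by_contra hc
    push_neg at hc
    have h1 : y*y ≤ x*x := mul_le_mul (by omega) (by omega) (by omega) (by omega)
    have h2 : (4*m+16)*y ≤ (4*m+16)*x := mul_le_mul_of_nonneg_left (by omega) (by omega)
    nlinarith
  have h1 : (x+1)*(x+1) ≤ y*y := mul_le_mul (by omega) (by omega) (by omega) (by omega)
  have h2 : (4*m+16)*(x+1) ≤ (4*m+16)*y := mul_le_mul_of_nonneg_left (by omega) (by omega)
  nlinarith

lemma zno02 (m x y : ℤ) (hm : 0 ≤ m) (hx1 : 1 ≤ x) (hy1 : 1 ≤ y)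
    (h : 2*x*x + (4*m+12)*x = 2*y*y + (4*m+20)*y + 16) : False := by
  have hxy : y + 1 ≤ x := by
    by_contra hc
    push_neg at hc
    have h1 : x*x ≤ y*y := mul_le_mul (by omega) (by omega) (by omega) (by omega)
    have h2 : (4*m+12)*x ≤ (4*m+12)*y := mul_le_mul_of_nonneg_left (by omega) (by omega)
    nlinarith
  rcases (by omega : x = y+1 ∨ x = y+2 ∨ y+3 ≤ x) with rfl | rfl | hk
  · have lin : (-4:ℤ)*y + 4*m - 2 = 0 := by linear_combination h
    omega
  · have lin : (8:ℤ)*m + 16 = 0 := by linear_combination h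
    omega
  · have h1 : (y+3)*(y+3) ≤ x*x := mul_le_mul (by omega) (by omega) (by omega) (by omega)
    have h2 : (4*m+12)*(y+3) ≤ (4*m+12)*x := mul_le_mul_of_nonneg_left (by omega) (by omega)
    nlinarith

lemma zno03 (m x y : ℤ) (hm : 0 ≤ m) (hx1 : 1 ≤ x) (hy1 : 1 ≤ y)
    (h : 2*x*x + (4*m+12)*x = 2*y*y + (4*m+16)*y + 16) : False := by
  have hxy : y + 1 ≤ x := by
    by_contra hc
    push_neg at hc
    have h1 : x*x ≤ y*y := mul_le_mul (by omega) (by omega) (by omega) (by omega)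
    have h2 : (4*m+12)*x ≤ (4*m+12)*y := mul_le_mul_of_nonneg_left (by omega) (by omega)
    nlinarith
  rcases (by omega : x = y+1 ∨ y+2 ≤ x) with rfl | hk
  · have lin : (4:ℤ)*m - 2 = 0 := by linear_combination h
    omega
  · have h1 : (y+2)*(y+2) ≤ x*x := mul_le_mul (by omega) (by omega) (by omega) (by omega)
    have h2 : (4*m+12)*(y+2) ≤ (4*m+12)*x := mul_le_mul_of_nonneg_left (by omega) (by omega)
    nlinarith

lemma zno12 (m x y : ℤ) (hm : 0 ≤ m) (hx1 : 1 ≤ x) (hy1 : 1 ≤ y) (hyu : y ≤ m+1)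
    (h : 2*x*x + (4*m+8)*x = 2*y*y + (4*m+20)*y + 16) : False := by
  have hxy : y + 1 ≤ x := by
    by_contra hc
    push_neg at hc
    have h1 : x*x ≤ y*y := mul_le_mul (by omega) (by omega) (by omega) (by omega)
    have h2 : (4*m+8)*x ≤ (4*m+8)*y := mul_le_mul_of_nonneg_left (by omega) (by omega)
    nlinarith
  rcases (by omega : x = y+1 ∨ x = y+2 ∨ x = y+3 ∨ y+4 ≤ x) with rfl | rfl | rfl | hk
  · have lin : (-8:ℤ)*y + 4*m - 6 = 0 := by linear_combination h
    omega
  · have lin : (-4:ℤ)*y + 8*m + 8 = 0 := by linear_combination h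
    omega
  · have lin : (12:ℤ)*m + 26 = 0 := by linear_combination h
    omega
  · have h1 : (y+4)*(y+4) ≤ x*x := mul_le_mul (by omega) (by omega) (by omega) (by omega)
    have h2 : (4*m+8)*(y+4) ≤ (4*m+8)*x := mul_le_mul_of_nonneg_left (by omega) (by omega)
    nlinarith

lemma zno13 (m x y : ℤ) (hm : 0 ≤ m) (hx1 : 1 ≤ x) (hy1 : 1 ≤ y)
    (h : 2*x*x + (4*m+8)*x = 2*y*y + (4*m+16)*y + 16) : False := by
  have hxy : y + 1 ≤ x := by
    by_contra hc
    push_neg at hc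
    have h1 : x*x ≤ y*y := mul_le_mul (by omega) (by omega) (by omega) (by omega)
    have h2 : (4*m+8)*x ≤ (4*m+8)*y := mul_le_mul_of_nonneg_left (by omega) (by omega)
    nlinarith
  rcases (by omega : x = y+1 ∨ x = y+2 ∨ y+3 ≤ x) with rfl | rfl | hk
  · have lin : (-4:ℤ)*y + 4*m - 6 = 0 := by linear_combination h
    omega
  · have lin : (8:ℤ)*m + 8 = 0 := by linear_combination h
    omega
  · have h1 : (y+3)*(y+3) ≤ x*x := mul_le_mul (by omega) (by omega) (by omega) (by omega)
    have h2 : (4*m+8)*(y+3) ≤ (4*m+8)*x := mul_le_mul_of_nonneg_left (by omega) (by omega)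
    nlinarith

lemma zdiag (a x y : ℤ) (ha : 0 ≤ a) (hx1 : 1 ≤ x) (hy1 : 1 ≤ y)
    (h : 2*x*x + a*x = 2*y*y + a*y) : x = y := by
  rcases lt_trichotomy x y with hlt | he | hlt
  · exfalso
    have h1 : (x+1)*(x+1) ≤ y*y := mul_le_mul (by omega) (by omega) (by omega) (by omega)
    have h2 : a*(x+1) ≤ a*y := mul_le_mul_of_nonneg_left (by omega) ha
    nlinarith
  · exact he
  · exfalso
    have h1 : (y+1)*(y+1) ≤ x*x := mul_le_mul (by omega) (by omega) (by omega) (by omega)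
    have h2 : a*(y+1) ≤ a*x := mul_le_mul_of_nonneg_left (by omega) ha
    nlinarith

lemma znoCA01 (m x a c : ℤ) (hm : 0 ≤ m) (hx1 : 1 ≤ x)
    (ha : a = 4*m+12 ∨ a = 4*m+8) (hc : c = 0 ∨ c = 6 ∨ c = 16)
    (h : 2*x*x + a*x = c) : False := by
  rcases (by omega : x = 1 ∨ x = 2 ∨ 3 ≤ x) with rfl | rfl | hk
  · rcases ha with rfl | rfl <;> rcases hc with rfl | rfl | rfl <;> omega
  · rcases ha with rfl | rfl <;> rcases hc with rfl | rfl | rfl <;> omega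
  · have h1 : 3*x ≤ x*x := mul_le_mul (by omega) (by omega) (by omega) (by omega)
    have h2 : a*1 ≤ a*x := mul_le_mul_of_nonneg_left (by omega) (by omega)
    rcases ha with rfl | rfl <;> rcases hc with rfl | rfl | rfl <;> nlinarith

lemma znoCA23 (m x a c : ℤ) (hm : 0 ≤ m) (hx1 : 1 ≤ x)
    (ha : a = 4*m+20 ∨ a = 4*m+16) (hc : c = 0 ∨ c = 6 ∨ c = 16)
    (h : 2*x*x + a*x + 16 = c) : False := by
  have h1 : 1*1 ≤ x*x := mul_le_mul (by omega) (by omega) (by omega) (by omega)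
  have h2 : a*1 ≤ a*x := mul_le_mul_of_nonneg_left (by omega) (by omega)
  rcases ha with rfl | rfl <;> rcases hc with rfl | rfl | rfl <;> nlinarith
end ZLemmas
section InjHelpers
variable {m : ℕ}

lemma inj01 (j : Fin (armLen (m+3) 0)) (j' : Fin (armLen (m+3) 1))
    (hF : F (m+3) (Sum.inr ⟨0, j⟩) = F (m+3) (Sum.inr ⟨1, j'⟩)) : False := by
  have hj : (j:ℕ) < m + 3 := j.isLt
  have hj' : (j':ℕ) < m + 4 := j'.isLt
  simp only [F, Matrix.cons_val_zero, Matrix.cons_val_one, Matrix.head_cons,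
    Matrix.cons_val_two, Matrix.tail_cons, Matrix.cons_val_three, Fin.isValue] at hF
  rw [show 4*(m+3)*(m+3)+8*(m+3)-2 = 4*m*m+32*m+58 from by
      have : 4*(m+3)*(m+3)+8*(m+3) = 4*m*m+32*m+60 := by ring
      omega, show 2*(m+3)-2 = 2*m+4 by omega] at hF
  zify at hF
  exact zno01 m (((j:ℕ):ℤ)+1) (((j':ℕ):ℤ)+1) (by omega) (by omega) (by omega) (by linear_combination hF)

lemma inj02 (j : Fin (armLen (m+3) 0)) (j' : Fin (armLen (m+3) 2))
    (hF : F (m+3) (Sum.inr ⟨0, j⟩) = F (m+3) (Sum.inr ⟨2, j'⟩)) : False := by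
  have hj : (j:ℕ) < m + 3 := j.isLt
  have hj' : (j':ℕ) < m + 1 := j'.isLt
  simp only [F, Matrix.cons_val_zero, Matrix.cons_val_one, Matrix.head_cons,
    Matrix.cons_val_two, Matrix.tail_cons, Matrix.cons_val_three, Fin.isValue] at hF
  rw [show 4*(m+3)*(m+3)+8*(m+3)-2 = 4*m*m+32*m+58 from by
      have : 4*(m+3)*(m+3)+8*(m+3) = 4*m*m+32*m+60 := by ring
      omega] at hF
  zify at hF
  exact zno02 m (((j:ℕ):ℤ)+1) (((j':ℕ):ℤ)+1) (by omega) (by omega) (by omega) (by linear_combination hF)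

lemma inj03 (j : Fin (armLen (m+3) 0)) (j' : Fin (armLen (m+3) 3))
    (hF : F (m+3) (Sum.inr ⟨0, j⟩) = F (m+3) (Sum.inr ⟨3, j'⟩)) : False := by
  have hj : (j:ℕ) < m + 3 := j.isLt
  have hj' : (j':ℕ) < m + 2 := j'.isLt
  simp only [F, Matrix.cons_val_zero, Matrix.cons_val_one, Matrix.head_cons,
    Matrix.cons_val_two, Matrix.tail_cons, Matrix.cons_val_three, Fin.isValue] at hF
  rw [show 4*(m+3)*(m+3)+8*(m+3)-2 = 4*m*m+32*m+58 from by
      have : 4*(m+3)*(m+3)+8*(m+3) = 4*m*m+32*m+60 := by ring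
      omega] at hF
  zify at hF
  exact zno03 m (((j:ℕ):ℤ)+1) (((j':ℕ):ℤ)+1) (by omega) (by omega) (by omega) (by linear_combination hF)

lemma inj12 (j : Fin (armLen (m+3) 1)) (j' : Fin (armLen (m+3) 2))
    (hF : F (m+3) (Sum.inr ⟨1, j⟩) = F (m+3) (Sum.inr ⟨2, j'⟩)) : False := by
  have hj : (j:ℕ) < m + 4 := j.isLt
  have hj' : (j':ℕ) < m + 1 := j'.isLt
  simp only [F, Matrix.cons_val_zero, Matrix.cons_val_one, Matrix.head_cons,
    Matrix.cons_val_two, Matrix.tail_cons, Matrix.cons_val_three, Fin.isValue] at hF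
  rw [show 4*(m+3)*(m+3)+8*(m+3)-2 = 4*m*m+32*m+58 from by
      have : 4*(m+3)*(m+3)+8*(m+3) = 4*m*m+32*m+60 := by ring
      omega, show 2*(m+3)-2 = 2*m+4 by omega] at hF
  zify at hF
  exact zno12 m (((j:ℕ):ℤ)+1) (((j':ℕ):ℤ)+1) (by omega) (by omega) (by omega) (by omega) (by linear_combination hF)

lemma inj13 (j : Fin (armLen (m+3) 1)) (j' : Fin (armLen (m+3) 3))
    (hF : F (m+3) (Sum.inr ⟨1, j⟩) = F (m+3) (Sum.inr ⟨3, j'⟩)) : False := by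
  have hj : (j:ℕ) < m + 4 := j.isLt
  have hj' : (j':ℕ) < m + 2 := j'.isLt
  simp only [F, Matrix.cons_val_zero, Matrix.cons_val_one, Matrix.head_cons,
    Matrix.cons_val_two, Matrix.tail_cons, Matrix.cons_val_three, Fin.isValue] at hF
  rw [show 4*(m+3)*(m+3)+8*(m+3)-2 = 4*m*m+32*m+58 from by
      have : 4*(m+3)*(m+3)+8*(m+3) = 4*m*m+32*m+60 := by ring
      omega, show 2*(m+3)-2 = 2*m+4 by omega] at hF
  zify at hF
  exact zno13 m (((j:ℕ):ℤ)+1) (((j':ℕ):ℤ)+1) (by omega) (by omega) (by omega) (by linear_combination hF)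

lemma inj23 (j : Fin (armLen (m+3) 2)) (j' : Fin (armLen (m+3) 3))
    (hF : F (m+3) (Sum.inr ⟨2, j⟩) = F (m+3) (Sum.inr ⟨3, j'⟩)) : False := by
  have hj : (j:ℕ) < m + 1 := j.isLt
  have hj' : (j':ℕ) < m + 2 := j'.isLt
  simp only [F, Matrix.cons_val_zero, Matrix.cons_val_one, Matrix.head_cons,
    Matrix.cons_val_two, Matrix.tail_cons, Matrix.cons_val_three, Fin.isValue] at hF
  rw [show 4*(m+3)*(m+3)+8*(m+3)-2 = 4*m*m+32*m+58 from by
      have : 4*(m+3)*(m+3)+8*(m+3) = 4*m*m+32*m+60 := by ring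
      omega] at hF
  zify at hF
  exact zno23 m (((j:ℕ):ℤ)+1) (((j':ℕ):ℤ)+1) (by omega) (by omega) (by omega) (by linear_combination hF)

lemma injD0 (j j' : Fin (armLen (m+3) 0))
    (hF : F (m+3) (Sum.inr ⟨0, j⟩) = F (m+3) (Sum.inr ⟨0, j'⟩)) :
    (Sum.inr ⟨0, j⟩ : HVert (m+3)) = Sum.inr ⟨0, j'⟩ := by
  have hj : (j:ℕ) < m + 3 := j.isLt
  have hj' : (j':ℕ) < m + 3 := j'.isLt
  simp only [F, Matrix.cons_val_zero, Matrix.cons_val_one, Matrix.head_cons,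
    Matrix.cons_val_two, Matrix.tail_cons, Matrix.cons_val_three, Fin.isValue] at hF
  rw [show 4*(m+3)*(m+3)+8*(m+3)-2 = 4*m*m+32*m+58 from by
      have : 4*(m+3)*(m+3)+8*(m+3) = 4*m*m+32*m+60 := by ring
      omega] at hF
  zify at hF
  have e := zdiag (4*m+12) (((j:ℕ):ℤ)+1) (((j':ℕ):ℤ)+1) (by omega) (by omega) (by omega)
    (by linear_combination hF)
  exact congrArg Sum.inr (sigma_ext rfl (by omega))

lemma injD1 (j j' : Fin (armLen (m+3) 1))
    (hF : F (m+3) (Sum.inr ⟨1, j⟩) = F (m+3) (Sum.inr ⟨1, j'⟩)) :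
    (Sum.inr ⟨1, j⟩ : HVert (m+3)) = Sum.inr ⟨1, j'⟩ := by
  have hj : (j:ℕ) < m + 4 := j.isLt
  have hj' : (j':ℕ) < m + 4 := j'.isLt
  simp only [F, Matrix.cons_val_zero, Matrix.cons_val_one, Matrix.head_cons,
    Matrix.cons_val_two, Matrix.tail_cons, Matrix.cons_val_three, Fin.isValue] at hF
  rw [show 4*(m+3)*(m+3)+8*(m+3)-2 = 4*m*m+32*m+58 from by
      have : 4*(m+3)*(m+3)+8*(m+3) = 4*m*m+32*m+60 := by ring
      omega, show 2*(m+3)-2 = 2*m+4 by omega] at hF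
  zify at hF
  have e := zdiag (4*m+8) (((j:ℕ):ℤ)+1) (((j':ℕ):ℤ)+1) (by omega) (by omega) (by omega)
    (by linear_combination hF)
  exact congrArg Sum.inr (sigma_ext rfl (by omega))

lemma injD2 (j j' : Fin (armLen (m+3) 2))
    (hF : F (m+3) (Sum.inr ⟨2, j⟩) = F (m+3) (Sum.inr ⟨2, j'⟩)) :
    (Sum.inr ⟨2, j⟩ : HVert (m+3)) = Sum.inr ⟨2, j'⟩ := by
  have hj : (j:ℕ) < m + 1 := j.isLt
  have hj' : (j':ℕ) < m + 1 := j'.isLt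
  simp only [F, Matrix.cons_val_zero, Matrix.cons_val_one, Matrix.head_cons,
    Matrix.cons_val_two, Matrix.tail_cons, Matrix.cons_val_three, Fin.isValue] at hF
  rw [show 4*(m+3)*(m+3)+8*(m+3)-2 = 4*m*m+32*m+58 from by
      have : 4*(m+3)*(m+3)+8*(m+3) = 4*m*m+32*m+60 := by ring
      omega] at hF
  zify at hF
  have e := zdiag (4*m+20) (((j:ℕ):ℤ)+1) (((j':ℕ):ℤ)+1) (by omega) (by omega) (by omega)
    (by linear_combination hF)
  exact congrArg Sum.inr (sigma_ext rfl (by omega))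

lemma injD3 (j j' : Fin (armLen (m+3) 3))
    (hF : F (m+3) (Sum.inr ⟨3, j⟩) = F (m+3) (Sum.inr ⟨3, j'⟩)) :
    (Sum.inr ⟨3, j⟩ : HVert (m+3)) = Sum.inr ⟨3, j'⟩ := by
  have hj : (j:ℕ) < m + 2 := j.isLt
  have hj' : (j':ℕ) < m + 2 := j'.isLt
  simp only [F, Matrix.cons_val_zero, Matrix.cons_val_one, Matrix.head_cons,
    Matrix.cons_val_two, Matrix.tail_cons, Matrix.cons_val_three, Fin.isValue] at hF
  rw [show 4*(m+3)*(m+3)+8*(m+3)-2 = 4*m*m+32*m+58 from by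
      have : 4*(m+3)*(m+3)+8*(m+3) = 4*m*m+32*m+60 := by ring
      omega] at hF
  zify at hF
  have e := zdiag (4*m+16) (((j:ℕ):ℤ)+1) (((j':ℕ):ℤ)+1) (by omega) (by omega) (by omega)
    (by linear_combination hF)
  exact congrArg Sum.inr (sigma_ext rfl (by omega))

lemma injC0 (c : Fin 3) (j : Fin (armLen (m+3) 0))
    (hF : F (m+3) (Sum.inl c) = F (m+3) (Sum.inr ⟨0, j⟩)) : False := by
  have hj : (j:ℕ) < m + 3 := j.isLt
  have hcv : (![0,6,16] c : ℕ) = 0 ∨ (![0,6,16] c : ℕ) = 6 ∨ (![0,6,16] c : ℕ) = 16 := by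
    fin_cases c <;> simp
  simp only [F, Matrix.cons_val_zero, Matrix.cons_val_one, Matrix.head_cons,
    Matrix.cons_val_two, Matrix.tail_cons, Matrix.cons_val_three, Fin.isValue] at hF
  rw [show 4*(m+3)*(m+3)+8*(m+3)-2 = 4*m*m+32*m+58 from by
      have : 4*(m+3)*(m+3)+8*(m+3) = 4*m*m+32*m+60 := by ring
      omega] at hF
  zify at hF hcv
  exact znoCA01 m (((j:ℕ):ℤ)+1) (4*m+12) (((![0,6,16] c : ℕ)):ℤ) (by omega) (by omega) (Or.inl rfl) hcv (by linear_combination -hF)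
lemma injC1 (c : Fin 3) (j : Fin (armLen (m+3) 1))
    (hF : F (m+3) (Sum.inl c) = F (m+3) (Sum.inr ⟨1, j⟩)) : False := by
  have hj : (j:ℕ) < m + 4 := j.isLt
  have hcv : (![0,6,16] c : ℕ) = 0 ∨ (![0,6,16] c : ℕ) = 6 ∨ (![0,6,16] c : ℕ) = 16 := by
    fin_cases c <;> simp
  simp only [F, Matrix.cons_val_zero, Matrix.cons_val_one, Matrix.head_cons,
    Matrix.cons_val_two, Matrix.tail_cons, Matrix.cons_val_three, Fin.isValue] at hF
  rw [show 4*(m+3)*(m+3)+8*(m+3)-2 = 4*m*m+32*m+58 from by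
      have : 4*(m+3)*(m+3)+8*(m+3) = 4*m*m+32*m+60 := by ring
      omega, show 2*(m+3)-2 = 2*m+4 by omega] at hF
  zify at hF hcv
  exact znoCA01 m (((j:ℕ):ℤ)+1) (4*m+8) (((![0,6,16] c : ℕ)):ℤ) (by omega) (by omega) (Or.inr rfl) hcv (by linear_combination -hF)
lemma injC2 (c : Fin 3) (j : Fin (armLen (m+3) 2))
    (hF : F (m+3) (Sum.inl c) = F (m+3) (Sum.inr ⟨2, j⟩)) : False := by
  have hj : (j:ℕ) < m + 1 := j.isLt
  have hcv : (![0,6,16] c : ℕ) = 0 ∨ (![0,6,16] c : ℕ) = 6 ∨ (![0,6,16] c : ℕ) = 16 := by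
    fin_cases c <;> simp
  simp only [F, Matrix.cons_val_zero, Matrix.cons_val_one, Matrix.head_cons,
    Matrix.cons_val_two, Matrix.tail_cons, Matrix.cons_val_three, Fin.isValue] at hF
  rw [show 4*(m+3)*(m+3)+8*(m+3)-2 = 4*m*m+32*m+58 from by
      have : 4*(m+3)*(m+3)+8*(m+3) = 4*m*m+32*m+60 := by ring
      omega] at hF
  zify at hF hcv
  exact znoCA23 m (((j:ℕ):ℤ)+1) (4*m+20) (((![0,6,16] c : ℕ)):ℤ) (by omega) (by omega) (Or.inl rfl) hcv (by linear_combination -hF)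
lemma injC3 (c : Fin 3) (j : Fin (armLen (m+3) 3))
    (hF : F (m+3) (Sum.inl c) = F (m+3) (Sum.inr ⟨3, j⟩)) : False := by
  have hj : (j:ℕ) < m + 2 := j.isLt
  have hcv : (![0,6,16] c : ℕ) = 0 ∨ (![0,6,16] c : ℕ) = 6 ∨ (![0,6,16] c : ℕ) = 16 := by
    fin_cases c <;> simp
  simp only [F, Matrix.cons_val_zero, Matrix.cons_val_one, Matrix.head_cons,
    Matrix.cons_val_two, Matrix.tail_cons, Matrix.cons_val_three, Fin.isValue] at hF
  rw [show 4*(m+3)*(m+3)+8*(m+3)-2 = 4*m*m+32*m+58 from by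
      have : 4*(m+3)*(m+3)+8*(m+3) = 4*m*m+32*m+60 := by ring
      omega] at hF
  zify at hF hcv
  exact znoCA23 m (((j:ℕ):ℤ)+1) (4*m+16) (((![0,6,16] c : ℕ)):ℤ) (by omega) (by omega) (Or.inr rfl) hcv (by linear_combination -hF)
lemma Finj (v u : HVert (m+3)) (hF : F (m+3) v = F (m+3) u) : v = u := by
  rcases v with c | ⟨i, j⟩ <;> rcases u with c' | ⟨i', j'⟩
  · fin_cases c <;> fin_cases c' <;>
      first
        | rfl
        | (exfalso
           simp [F] at hF <;> omega)
  · exfalso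
    fin_cases i'
    · exact injC0 c j' hF
    · exact injC1 c j' hF
    · exact injC2 c j' hF
    · exact injC3 c j' hF
  · exfalso
    fin_cases i
    · exact injC0 c' j hF.symm
    · exact injC1 c' j hF.symm
    · exact injC2 c' j hF.symm
    · exact injC3 c' j hF.symm
  · fin_cases i <;> fin_cases i'
    · exact injD0 j j' hF
    · exact (inj01 j j' hF).elim
    · exact (inj02 j j' hF).elim
    · exact (inj03 j j' hF).elim
    · exact (inj01 j' j hF.symm).elim
    · exact injD1 j j' hF
    · exact (inj12 j j' hF).elim
    · exact (inj13 j j' hF).elim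
    · exact (inj02 j' j hF.symm).elim
    · exact (inj12 j' j hF.symm).elim
    · exact injD2 j j' hF
    · exact (inj23 j j' hF).elim
    · exact (inj03 j' j hF.symm).elim
    · exact (inj13 j' j hF.symm).elim
    · exact (inj23 j' j hF.symm).elim
    · exact injD3 j j' hF

end InjHelpers

/-- For every `b ≥ 3`, the tree `H²(b-2, b-1; b, b+1)` is a transmission irregular
tree of order `4b + 1`. -/
theorem stmt_8 (b : ℕ) (hb : 3 ≤ b) :
    Fintype.card (HVert b) = 4 * b + 1 ∧ (Htree b).IsTree ∧
      Function.Injective (transmission (Htree b)) := by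
  obtain ⟨m, rfl⟩ : ∃ m, b = m + 3 := ⟨b - 3, by omega⟩
  refine ⟨?_, ⟨H_conn, H_acyclic⟩, ?_⟩
  · simp [HVert, Fintype.card_sum, Fintype.card_sigma, Fin.sum_univ_four, armLen]
    omega
  · intro v u h
    have h1 := trans2 (m := m) v
    have h2 := trans2 (m := m) u
    rw [h] at h1
    exact Finj v u (by omega)
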